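/- Let v be a generator of the kG-module V and π a permutation of G, extended linearly to the group algebra kG. Then π is an orbit symmetry for v if and only if π(Ann(v)) ⊆ Ann(v), where Ann(v) = {a ∈ kG : av = 0} is the annihilator left ideal of v. -/

import Mathlib

/-- For a generator `v` of the `kG`-module `V` and a permutation `π` of
`G` (extended linearly to the group algebra), `π` is an orbit symmetry for `v` iff
`π(Ann(v)) ⊆ Ann(v)`. -/
theorem orbit_sym_iff_maps_annihilator
    {k G V : Type*} [Field k] [Group G] [Finite G]
    [AddCommGroup V] [Module k V]
    (ρ : Representation k G V) (v : V)
    (hv : Submodule.span k (Set.range fun g : G => ρ g v) = ⊤)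
    (π : Equiv.Perm G) :
    (∃ A : V ≃ₗ[k] V, ∀ g : G, A (ρ g v) = ρ (π g) v) ↔
    (∀ a : MonoidAlgebra k G, ρ.asAlgebraHom a v = 0 →
      ρ.asAlgebraHom (MonoidAlgebra.mapDomain π a) v = 0) := by
  classical
  have : Fintype G := Fintype.ofFinite G
  set Φ : MonoidAlgebra k G →ₗ[k] V :=
    { toFun := fun a => ρ.asAlgebraHom a v
      map_add' := by intro a b; simp
      map_smul' := by intro c a; simp } with hΦdef
  have hΦ : ∀ a : MonoidAlgebra k G, Φ a = ρ.asAlgebraHom a v := fun a => rfl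
  have hΦsingle : ∀ (g : G) (r : k), Φ (MonoidAlgebra.single g r) = r • ρ g v := by
    intro g r
    simp [hΦ, Representation.asAlgebraHom_single]
  have hΦs : Function.Surjective Φ := by
    rw [← LinearMap.range_eq_top, ← top_le_iff, ← hv, Submodule.span_le]
    rintro _ ⟨g, rfl⟩
    exact ⟨MonoidAlgebra.single g 1, by simp [hΦsingle]⟩
  set P : MonoidAlgebra k G ≃ₗ[k] MonoidAlgebra k G := MonoidAlgebra.mapDomainLinearEquiv k k π with hPdef
  have hP : ∀ a : MonoidAlgebra k G, P a = MonoidAlgebra.mapDomain π a := by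
    intro a
    apply MonoidAlgebra.coeff_injective
    rw [hPdef, MonoidAlgebra.coeff_mapDomainLinearEquiv]
    exact Finsupp.equivMapDomain_eq_mapDomain π a.coeff
  constructor
  · rintro ⟨A, hA⟩ a ha
    have key : Φ.comp P.toLinearMap = (A : V →ₗ[k] V).comp Φ := by
      apply MonoidAlgebra.lhom_ext'
      intro g; refine LinearMap.ext fun r => ?_
      show Φ (P (MonoidAlgebra.single g r)) = A (Φ (MonoidAlgebra.single g r))
      rw [hP, MonoidAlgebra.mapDomain_single, hΦsingle, hΦsingle, map_smul, hA]
    have := congrArg (fun f => f a) key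
    simp only [LinearMap.comp_apply, LinearEquiv.coe_coe, LinearMap.coe_comp,
      Function.comp_apply] at this
    rw [← hΦ, ← hP, this, hΦ a, ha, map_zero]
  · intro h
    have : Module.Finite k (MonoidAlgebra k G) :=
      Module.Finite.equiv ((MonoidAlgebra.coeffLinearEquiv k).trans (Finsupp.linearEquivFunOnFinite k k G)).symm
    set K := LinearMap.ker Φ with hK
    have hle : K.map (P : MonoidAlgebra k G →ₗ[k] MonoidAlgebra k G) ≤ K := by
      rintro _ ⟨x, hx, rfl⟩
      have hx' : Φ x = 0 := hx
      rw [hK, LinearMap.mem_ker]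
      show Φ (P x) = 0
      rw [hP, hΦ]
      exact h x (by rw [← hΦ]; exact hx')
    have hmap : K.map (P : MonoidAlgebra k G →ₗ[k] MonoidAlgebra k G) = K := by
      apply Submodule.eq_of_le_of_finrank_le hle
      rw [LinearEquiv.finrank_map_eq]
    let Q : (MonoidAlgebra k G ⧸ K) ≃ₗ[k] (MonoidAlgebra k G ⧸ K) :=
      Submodule.Quotient.equiv K K P hmap
    let e : (MonoidAlgebra k G ⧸ K) ≃ₗ[k] V := Φ.quotKerEquivOfSurjective hΦs
    have he : ∀ x : MonoidAlgebra k G, e (Submodule.Quotient.mk x) = Φ x := by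
      intro x
      rfl
    refine ⟨(e.symm.trans Q).trans e, ?_⟩
    intro g
    have h1 : ρ g v = Φ (MonoidAlgebra.single g 1) := by simp [hΦsingle]
    have h2 : ρ (π g) v = Φ (MonoidAlgebra.single (π g) 1) := by simp [hΦsingle]
    rw [h1, h2, ← he, ← he]
    have h3 : e.symm (e (Submodule.Quotient.mk (MonoidAlgebra.single g 1))) =
        Submodule.Quotient.mk (MonoidAlgebra.single g 1) := e.symm_apply_apply _
    simp only [LinearEquiv.trans_apply, h3]
    congr 1
    show Q (Submodule.Quotient.mk (MonoidAlgebra.single g 1)) = _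
    rw [show Q (Submodule.Quotient.mk (MonoidAlgebra.single g 1)) =
        Submodule.Quotient.mk (P (MonoidAlgebra.single g 1)) from
      Submodule.Quotient.equiv_apply K K P hmap _]
    congr 1
    rw [hP, MonoidAlgebra.mapDomain_single]
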